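/- arXiv:2602.06104 — 2 statements merged into one kernel-verified Lean document; each statement's English description precedes it below -/
import Mathlib

section
/- (Lemma 3.2 / Lemma C.1, reduction to finitely many coordinates.) Let μ be a probability measure on a measurable space Ω, let T : Ω → Ω' be a measurable map into a measurable space Ω', let g : Ω' → ℝ be measurable with g ≥ 0, and set L := g ∘ T and Z := ∫ g d(μ.map T) = ∫ L dμ, assumed to satisfy 0 < Z < ∞. Define the posterior measures ν := μ.withDensity(ω ↦ L(ω)/Z) on Ω and ν' := (μ.map T).withDensity(ω' ↦ g(ω')/Z) on Ω'. Then (i) ν.map T = ν', and (ii) the Kullback–Leibler divergence of ν from μ equals the Kullback–Leibler divergence of ν' from μ.map T. -/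
open MeasureTheory Real
open scoped ENNReal NNReal

open scoped Classical in
/-- The Kullback–Leibler divergence of a measure `μ` from a measure `ν`
(in `ℝ≥0∞`, infinite unless `μ ≪ ν` and the log-likelihood ratio is
integrable). -/
noncomputable def klDiv {α : Type*} [MeasurableSpace α]
    (μ ν : Measure α) : ℝ≥0∞ :=
  if μ ≪ ν ∧ Integrable (llr μ ν) μ
  then ENNReal.ofReal (∫ x, llr μ ν x ∂μ) else ⊤

/-- Reduction to finitely many coordinates: if the likelihood factors through
a measurable map `T`, then the pushforward of the posterior is the posterior
of the pushforward, and the information gain (KL divergence of posterior from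
prior) is the same on both spaces. -/
theorem klDiv_posterior_map_eq
    {Ω Ω' : Type*} [MeasurableSpace Ω] [MeasurableSpace Ω']
    (μ : Measure Ω) [IsProbabilityMeasure μ]
    (T : Ω → Ω') (hT : Measurable T)
    (g : Ω' → ℝ) (hg_meas : Measurable g) (hg_nonneg : ∀ ω', 0 ≤ g ω')
    (L : Ω → ℝ) (hL : L = g ∘ T)
    (hg_int : Integrable g (μ.map T))
    (Z : ℝ) (hZ : Z = ∫ ω', g ω' ∂(μ.map T)) (hZ' : Z = ∫ ω, L ω ∂μ)
    (hZ_pos : 0 < Z)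
    (ν : Measure Ω)
    (hν : ν = μ.withDensity (fun ω => ENNReal.ofReal (L ω / Z)))
    (ν' : Measure Ω')
    (hν' : ν' = (μ.map T).withDensity (fun ω' => ENNReal.ofReal (g ω' / Z))) :
    ν.map T = ν' ∧ klDiv ν μ = klDiv ν' (μ.map T) := by
  subst hL hν hν'
  set dens' : Ω' → ℝ≥0∞ := fun ω' => ENNReal.ofReal (g ω' / Z) with hdens'
  have hdens'_meas : Measurable dens' := (hg_meas.div_const Z).ennreal_ofReal
  have hdens_meas : Measurable (fun ω => ENNReal.ofReal ((g ∘ T) ω / Z)) :=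
    hdens'_meas.comp hT
  set ν : Measure Ω := μ.withDensity (fun ω => ENNReal.ofReal ((g ∘ T) ω / Z)) with hν
  set ν' : Measure Ω' := (μ.map T).withDensity dens' with hν'
  -- (i) the pushforward of the posterior is the posterior of the pushforward
  have hmap : ν.map T = ν' := by
    ext s hs
    rw [Measure.map_apply hT hs, hν, hν', withDensity_apply _ (hT hs),
      withDensity_apply _ hs, setLIntegral_map hs hdens'_meas hT]
    rfl
  refine ⟨hmap, ?_⟩
  -- (ii) equality of KL divergences
  have hac : ν ≪ μ := withDensity_absolutelyContinuous _ _
  have hac' : ν' ≪ μ.map T := withDensity_absolutelyContinuous _ _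
  set f' : Ω' → ℝ := fun ω' => Real.log (g ω' / Z) with hf'
  have hf'_meas : Measurable f' := (hg_meas.div_const Z).log
  -- llr of ν wrt μ is (f' ∘ T) a.e. [ν]
  have hllr : llr ν μ =ᵐ[ν] fun ω => f' (T ω) := by
    have hrn : ν.rnDeriv μ =ᵐ[μ] fun ω => ENNReal.ofReal ((g ∘ T) ω / Z) :=
      Measure.rnDeriv_withDensity μ hdens_meas
    filter_upwards [hac hrn] with ω hω
    simp only [llr, hω, hf', Function.comp_apply,
      ENNReal.toReal_ofReal (div_nonneg (hg_nonneg (T ω)) hZ_pos.le)]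
  -- llr of ν' wrt μ.map T is f' a.e. [ν']
  have hllr' : llr ν' (μ.map T) =ᵐ[ν'] f' := by
    have hrn : ν'.rnDeriv (μ.map T) =ᵐ[μ.map T] dens' :=
      Measure.rnDeriv_withDensity (μ.map T) hdens'_meas
    filter_upwards [hac' hrn] with ω' hω'
    simp only [llr, hω', hdens',
      ENNReal.toReal_ofReal (div_nonneg (hg_nonneg ω') hZ_pos.le)]
    rfl
  have hcomp_int : Integrable (fun ω => f' (T ω)) ν ↔ Integrable f' ν' := by
    rw [← hmap]
    exact (integrable_map_measure (hf'_meas.aestronglyMeasurable) hT.aemeasurable).symm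
  have hint_iff : Integrable (llr ν μ) ν ↔ Integrable (llr ν' (μ.map T)) ν' := by
    rw [integrable_congr hllr, integrable_congr hllr']
    exact hcomp_int
  have hint_eq : ∫ x, llr ν μ x ∂ν = ∫ x, llr ν' (μ.map T) x ∂ν' := by
    rw [integral_congr_ae hllr, integral_congr_ae hllr', ← hmap,
      integral_map hT.aemeasurable hf'_meas.aestronglyMeasurable]
  simp only [klDiv]
  by_cases h : Integrable (llr ν μ) ν
  · rw [if_pos ⟨hac, h⟩, if_pos ⟨hac', hint_iff.mp h⟩, hint_eq]
  · rw [if_neg (fun h' => h h'.2), if_neg (fun h' => h (hint_iff.mpr h'.2))]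
end

section
/- (Gaussian information gain formula.) Let m ∈ ℝ and let v_t > 0 and v > 0 be variances. Consider the prior f ∼ N(m, v_t) (the Gaussian measure gaussianReal m v_t on ℝ) and, for each f ∈ ℝ, the observation law y | f ∼ N(f, v). Then ∫ D_KL( N(f, v) ‖ N(m, v_t + v) ) d(N(m, v_t))(f) = (1/2) · log(1 + v_t / v), where D_KL denotes the Kullback–Leibler divergence between the Gaussian measures (taken as a real number, which is finite here). -/
open MeasureTheory Real ProbabilityTheory
open scoped ENNReal NNReal

open Set

section Aux


lemma first_moment {b : ℝ} : ∫ x : ℝ, x * rexp (-b * x ^ 2) = 0 := by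
  have h := integral_neg_eq_self (fun x : ℝ => x * rexp (-b * x ^ 2)) volume
  simp only [neg_sq, neg_mul, integral_neg] at h
  simp only [neg_mul]
  linarith

lemma second_moment {b : ℝ} (hb : 0 < b) :
    ∫ x : ℝ, x ^ 2 * rexp (-b * x ^ 2) = Real.sqrt (π / b) / (2 * b) := by
  have habs := integral_comp_abs (f := fun y : ℝ => y ^ 2 * rexp (-b * y ^ 2))
  simp only [sq_abs] at habs
  rw [habs]
  have h2 : ∀ x ∈ Ioi (0:ℝ), x ^ 2 * rexp (-b * x ^ 2)
      = x ^ (2:ℝ) * rexp (-b * x ^ (2:ℝ)) := by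
    intro x _; rw [Real.rpow_two]
  rw [setIntegral_congr_fun measurableSet_Ioi h2,
    integral_rpow_mul_exp_neg_mul_rpow two_pos (by norm_num) hb]
  have h3 : ((2:ℝ) + 1) / 2 = 1 / 2 + 1 := by norm_num
  rw [h3, Real.Gamma_add_one (by norm_num), Real.Gamma_one_half_eq]
  have hb' : (0:ℝ) < Real.sqrt b := Real.sqrt_pos.mpr hb
  have e1 : b ^ (-((2:ℝ)+1)/2) = (b * Real.sqrt b)⁻¹ := by
    rw [show (-((2:ℝ)+1)/2) = -(1 + 1/2) by norm_num, Real.rpow_neg hb.le,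
      Real.rpow_add hb, Real.rpow_one, ← Real.sqrt_eq_rpow]
  rw [e1, Real.sqrt_div pi_pos.le]
  field_simp


lemma integral_gaussianReal_eq (μ : ℝ) {v : ℝ≥0} (hv : v ≠ 0) (g : ℝ → ℝ) :
    ∫ x, g x ∂(gaussianReal μ v) = ∫ x, g x * gaussianPDFReal μ v x := by
  rw [gaussianReal_of_var_ne_zero μ hv]
  have hd : gaussianPDF μ v = fun x => ((gaussianPDFReal μ v x).toNNReal : ℝ≥0∞) := by
    ext x; rfl
  rw [hd, integral_withDensity_eq_integral_smul
    (measurable_gaussianPDFReal μ v).real_toNNReal g]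
  congr 1
  ext x
  rw [NNReal.smul_def, Real.coe_toNNReal _ (gaussianPDFReal_nonneg μ v x),
    smul_eq_mul, mul_comm]

lemma integrable_gaussianReal_iff (μ : ℝ) {v : ℝ≥0} (hv : v ≠ 0) (g : ℝ → ℝ) :
    Integrable g (gaussianReal μ v) ↔
      Integrable (fun x => g x * gaussianPDFReal μ v x) volume := by
  rw [gaussianReal_of_var_ne_zero μ hv]
  rw [integrable_withDensity_iff (measurable_gaussianPDF μ v)
    (ae_of_all _ fun x => ENNReal.ofReal_lt_top)]
  refine integrable_congr (ae_of_all _ fun x => ?_)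
  simp only [gaussianPDF_def, ENNReal.toReal_ofReal (gaussianPDFReal_nonneg μ v x)]

lemma gaussianPDFReal_eq (μ : ℝ) (v : ℝ≥0) (x : ℝ) :
    gaussianPDFReal μ v x
      = (Real.sqrt (2 * π * v))⁻¹ * rexp (-(2 * (v:ℝ))⁻¹ * (x - μ) ^ 2) := by
  rw [gaussianPDFReal]
  congr 1
  rw [neg_div, div_eq_inv_mul, neg_mul]

lemma integrable_sq_exp {b : ℝ} (hb : 0 < b) :
    Integrable fun x : ℝ => x ^ 2 * rexp (-b * x ^ 2) := by
  have h := integrable_rpow_mul_exp_neg_mul_sq hb (s := 2) (by norm_num)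
  simpa [Real.rpow_two] using h

lemma integral_sub_sq_gaussianReal (μ c : ℝ) {v : ℝ≥0} (hv : v ≠ 0) :
    ∫ x, (x - c) ^ 2 ∂(gaussianReal μ v) = (v : ℝ) + (μ - c) ^ 2 := by
  have hv' : (0:ℝ) < v := by
    have := (pos_iff_ne_zero (a := v)).mpr hv
    exact_mod_cast this
  set b : ℝ := (2 * (v:ℝ))⁻¹ with hbdef
  have hb : 0 < b := by positivity
  set C : ℝ := (Real.sqrt (2 * π * v))⁻¹ with hCdef
  set d : ℝ := μ - c with hddef
  rw [integral_gaussianReal_eq μ hv]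
  have h1 : ∀ x : ℝ, (x - c) ^ 2 * gaussianPDFReal μ v x
      = (fun y : ℝ => (y + d) ^ 2 * (C * rexp (-b * y ^ 2))) (x - μ) := by
    intro x
    simp only [gaussianPDFReal_eq, hddef, hCdef, hbdef]
    ring_nf
  simp only [h1]
  rw [integral_sub_right_eq_self (fun y : ℝ => (y + d) ^ 2 * (C * rexp (-b * y ^ 2))) μ]
  have h2 : ∀ y : ℝ, (y + d) ^ 2 * (C * rexp (-b * y ^ 2))
      = C * (y ^ 2 * rexp (-b * y ^ 2)) + (2 * d * C) * (y * rexp (-b * y ^ 2))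
        + (d ^ 2 * C) * rexp (-b * y ^ 2) := by
    intro y; ring
  simp only [h2]
  have i2 : Integrable fun y : ℝ => C * (y ^ 2 * rexp (-b * y ^ 2)) :=
    (integrable_sq_exp hb).const_mul C
  have i1 : Integrable fun y : ℝ => (2 * d * C) * (y * rexp (-b * y ^ 2)) :=
    (integrable_mul_exp_neg_mul_sq hb).const_mul _
  have i0 : Integrable fun y : ℝ => (d ^ 2 * C) * rexp (-b * y ^ 2) :=
    (integrable_exp_neg_mul_sq hb).const_mul _
  have i21 : Integrable (fun y : ℝ => C * (y ^ 2 * rexp (-b * y ^ 2))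
      + (2 * d * C) * (y * rexp (-b * y ^ 2))) volume := i2.add i1
  rw [integral_add i21 i0, integral_add i2 i1, MeasureTheory.integral_const_mul,
    MeasureTheory.integral_const_mul, MeasureTheory.integral_const_mul, second_moment hb, first_moment,
    integral_gaussian]
  have hπb : π / b = 2 * π * (v:ℝ) := by
    rw [hbdef]
    field_simp
  rw [hπb]
  have hs : Real.sqrt (2 * π * (v:ℝ)) > 0 := by positivity
  have hC1 : C * Real.sqrt (2 * π * (v:ℝ)) = 1 := inv_mul_cancel₀ hs.ne'
  have h2b : 2 * b = ((v:ℝ))⁻¹ := by rw [hbdef]; field_simp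
  rw [h2b]
  have hdiv : Real.sqrt (2*π*(v:ℝ)) / ((v:ℝ))⁻¹ = Real.sqrt (2*π*(v:ℝ)) * v := by
    field_simp
  rw [hdiv, mul_zero]
  linear_combination ((v:ℝ) + d ^ 2) * hC1

lemma integrable_sub_sq_gaussianReal (μ c : ℝ) {v : ℝ≥0} (hv : v ≠ 0) :
    Integrable (fun x => (x - c) ^ 2) (gaussianReal μ v) := by
  have hv' : (0:ℝ) < v := by
    have := (pos_iff_ne_zero (a := v)).mpr hv; exact_mod_cast this
  set b : ℝ := (2 * (v:ℝ))⁻¹ with hbdef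
  have hb : 0 < b := by positivity
  set C : ℝ := (Real.sqrt (2 * π * v))⁻¹ with hCdef
  set d : ℝ := μ - c with hddef
  rw [integrable_gaussianReal_iff μ hv]
  have hI : Integrable (fun y : ℝ => (y + d) ^ 2 * (C * rexp (-b * y ^ 2))) volume := by
    have i2 : Integrable fun y : ℝ => C * (y ^ 2 * rexp (-b * y ^ 2)) :=
      (integrable_sq_exp hb).const_mul C
    have i1 : Integrable fun y : ℝ => (2 * d * C) * (y * rexp (-b * y ^ 2)) :=
      (integrable_mul_exp_neg_mul_sq hb).const_mul _
    have i0 : Integrable fun y : ℝ => (d ^ 2 * C) * rexp (-b * y ^ 2) :=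
      (integrable_exp_neg_mul_sq hb).const_mul _
    exact ((i2.add i1).add i0).congr (ae_of_all _ fun y => by simp only [Pi.add_apply]; ring)
  have := hI.comp_sub_right μ
  refine this.congr (ae_of_all _ fun x => ?_)
  simp only [gaussianPDFReal_eq, hddef, hCdef, hbdef]
  ring_nf

lemma rnDeriv_gaussianReal_gaussianReal (f m : ℝ) {v s : ℝ≥0} (hv : v ≠ 0) (hs : s ≠ 0) :
    (gaussianReal f v).rnDeriv (gaussianReal m s)
      =ᵐ[volume] fun x => (gaussianPDF m s x)⁻¹ * gaussianPDF f v x := by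
  have h1 := MeasureTheory.Measure.rnDeriv_withDensity_right (gaussianReal f v) volume
    (measurable_gaussianPDF m s).aemeasurable
    (ae_of_all _ fun x => (gaussianPDF_pos m hs x).ne')
    (ae_of_all _ fun x => ENNReal.ofReal_ne_top)
  rw [← gaussianReal_of_var_ne_zero m hs] at h1
  have h2 := rnDeriv_gaussianReal f v
  filter_upwards [h1, h2] with x hx1 hx2
  rw [hx1, hx2]

lemma klDiv_gaussianReal (f m : ℝ) {v s : ℝ≥0} (hv : v ≠ 0) (hs : s ≠ 0) :
    klDiv (gaussianReal f v) (gaussianReal m s)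
      = ENNReal.ofReal
          ((1/2) * Real.log ((s:ℝ)/(v:ℝ)) + ((f - m)^2 + (v:ℝ))/(2*(s:ℝ)) - 1/2) := by
  have hv' : (0:ℝ) < v := by
    have := (pos_iff_ne_zero (a := v)).mpr hv; exact_mod_cast this
  have hs' : (0:ℝ) < s := by
    have := (pos_iff_ne_zero (a := s)).mpr hs; exact_mod_cast this
  set μ := gaussianReal f v with hμ
  set ν := gaussianReal m s with hν
  have hac : μ ≪ ν :=
    (gaussianReal_absolutelyContinuous f hv).trans
      (gaussianReal_absolutelyContinuous' m hs)
  have hacvol : μ ≪ volume := gaussianReal_absolutelyContinuous f hv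
  set g : ℝ → ℝ := fun x =>
    (x - m)^2 / (2*(s:ℝ)) - (x - f)^2 / (2*(v:ℝ)) + (1/2) * Real.log ((s:ℝ)/(v:ℝ))
    with hg
  have hllr : llr μ ν =ᵐ[μ] g := by
    refine hacvol.ae_eq ?_
    filter_upwards [rnDeriv_gaussianReal_gaussianReal f m hv hs] with x hx
    rw [llr_def]
    simp only
    rw [hx]
    have hpv : 0 < gaussianPDFReal f v x := gaussianPDFReal_pos f v x hv
    have hps : 0 < gaussianPDFReal m s x := gaussianPDFReal_pos m s x hs
    simp only [gaussianPDF_def]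
    rw [← ENNReal.ofReal_inv_of_pos hps, ← ENNReal.ofReal_mul (by positivity),
      ENNReal.toReal_ofReal (by positivity)]
    rw [Real.log_mul (by positivity) hpv.ne', Real.log_inv]
    rw [gaussianPDFReal_def, gaussianPDFReal_def]
    simp only
    rw [Real.log_mul (by positivity) (Real.exp_pos _).ne',
      Real.log_mul (by positivity) (Real.exp_pos _).ne',
      Real.log_exp, Real.log_exp, Real.log_inv, Real.log_inv,
      Real.log_sqrt (by positivity), Real.log_sqrt (by positivity)]
    have hlog : Real.log (2*π*(s:ℝ)) - Real.log (2*π*(v:ℝ)) = Real.log ((s:ℝ)/(v:ℝ)) := by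
      rw [← Real.log_div (by positivity) (by positivity)]
      congr 1
      field_simp
    rw [hg]
    simp only
    rw [← hlog]
    ring
  have hA : Integrable (fun x => (x - m)^2 / (2*(s:ℝ))) μ :=
    (integrable_sub_sq_gaussianReal f m hv).div_const _
  have hB : Integrable (fun x => (x - f)^2 / (2*(v:ℝ))) μ :=
    (integrable_sub_sq_gaussianReal f f hv).div_const _
  have hintg : Integrable g μ := by
    rw [hg]
    exact (hA.sub hB).add (integrable_const _)
  have hi : Integrable (llr μ ν) μ := hintg.congr hllr.symm
  rw [klDiv, if_pos ⟨hac, hi⟩]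
  congr 1
  rw [integral_congr_ae hllr, hg]
  simp only
  have hAB : Integrable (fun x => (x - m)^2 / (2*(s:ℝ)) - (x - f)^2 / (2*(v:ℝ))) μ :=
    hA.sub hB
  rw [integral_add hAB (integrable_const _), integral_sub hA hB,
    integral_div, integral_div, integral_sub_sq_gaussianReal f m hv,
    integral_sub_sq_gaussianReal f f hv, integral_const]
  simp only [measure_univ, probReal_univ, ENNReal.toReal_one, smul_eq_mul, one_mul, sub_self,
    ne_eq, OfNat.ofNat_ne_zero, not_false_eq_true, zero_pow, add_zero]
  field_simp
  ring

end Aux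

/-- Gaussian information gain formula: with prior `f ~ N(m, v_t)` and
observation law `y | f ~ N(f, v)`, the prior-averaged KL divergence of the
conditional observation law from the marginal observation law `N(m, v_t + v)`
equals `(1/2) log (1 + v_t / v)`. -/
theorem gaussian_information_gain
    (m : ℝ) (vt v : ℝ≥0) (hvt : 0 < vt) (hv : 0 < v) :
    ∫ f, (klDiv (gaussianReal f v) (gaussianReal m (vt + v))).toReal
        ∂(gaussianReal m vt) =
      (1 / 2) * Real.log (1 + (vt : ℝ) / (v : ℝ)) := by
  have hv' : (0:ℝ) < v := by exact_mod_cast hv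
  have hvt' : (0:ℝ) < vt := by exact_mod_cast hvt
  set s : ℝ≥0 := vt + v with hsdef
  have hs : s ≠ 0 := by positivity
  have hs' : (0:ℝ) < s := by
    have := (pos_iff_ne_zero (a := s)).mpr hs; exact_mod_cast this
  have hsc : (s:ℝ) = (vt:ℝ) + (v:ℝ) := by exact_mod_cast NNReal.coe_add vt v
  have hnn : ∀ f : ℝ,
      0 ≤ (1/2) * Real.log ((s:ℝ)/(v:ℝ)) + ((f - m)^2 + (v:ℝ))/(2*(s:ℝ)) - 1/2 := by
    intro f
    have hlog : Real.log ((v:ℝ)/(s:ℝ)) ≤ (v:ℝ)/(s:ℝ) - 1 :=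
      Real.log_le_sub_one_of_pos (by positivity)
    have hL : Real.log ((s:ℝ)/(v:ℝ)) = - Real.log ((v:ℝ)/(s:ℝ)) := by
      rw [← Real.log_inv, inv_div]
    have hsplit : ((f - m)^2 + (v:ℝ))/(2*(s:ℝ))
        = (f - m)^2/(2*(s:ℝ)) + (1/2) * ((v:ℝ)/(s:ℝ)) := by ring
    have hA : 0 ≤ (f - m)^2/(2*(s:ℝ)) := by positivity
    rw [hL, hsplit]
    linarith
  have hcongr : ∀ f : ℝ,
      (klDiv (gaussianReal f v) (gaussianReal m s)).toReal
        = (f - m)^2/(2*(s:ℝ))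
          + ((1/2) * Real.log ((s:ℝ)/(v:ℝ)) + (v:ℝ)/(2*(s:ℝ)) - 1/2) := by
    intro f
    rw [klDiv_gaussianReal f m hv.ne' hs, ENNReal.toReal_ofReal (hnn f)]
    ring
  rw [integral_congr_ae (ae_of_all _ hcongr)]
  have hA : Integrable (fun f => (f - m)^2 / (2*(s:ℝ))) (gaussianReal m vt) :=
    (integrable_sub_sq_gaussianReal m m hvt.ne').div_const _
  rw [integral_add hA (integrable_const _), integral_div,
    integral_sub_sq_gaussianReal m m hvt.ne', integral_const]
  simp only [measure_univ, probReal_univ, ENNReal.toReal_one, one_smul, sub_self, ne_eq,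
    OfNat.ofNat_ne_zero, not_false_eq_true, zero_pow, add_zero]
  have hlogeq : Real.log ((s:ℝ)/(v:ℝ)) = Real.log (1 + (vt:ℝ)/(v:ℝ)) := by
    congr 1
    rw [hsc]
    field_simp
    ring
  rw [hlogeq, hsc]
  field_simp
  ring
end
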